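/- Let f : Set E → ℝ be a set function and F its multilinear extension. Then f is submodular if and only if for all x ∈ [0,1]^E and all distinct e, e' ∈ E, the mixed second partial derivative ∂²F/∂x_e ∂x_{e'}(x) ≤ 0. -/
import Mathlib


open Finset

/-- The multilinear extension of a set function `f`. -/
noncomputable def multilinear {E : Type*} [DecidableEq E] [Fintype E]
    (f : Finset E → ℝ) (x : E → ℝ) : ℝ :=
  ∑ S : Finset E, f S * (∏ e ∈ S, x e) * ∏ e ∈ Sᶜ, (1 - x e)

section Helpers

variable {E : Type*} [DecidableEq E] [Fintype E]

lemma prod_upd_mem (s : Finset E) (x : E → ℝ) (e : E) (b : ℝ) (h : e ∈ s) :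
    ∏ i ∈ s, Function.update x e b i = b * ∏ i ∈ s.erase e, x i := by
  rw [Finset.prod_update_of_mem h, Finset.sdiff_singleton_eq_erase]

lemma one_sub_upd (x : E → ℝ) (e : E) (a : ℝ) :
    (fun i => 1 - Function.update x e a i) = Function.update (fun i => 1 - x i) e (1 - a) := by
  funext i
  rcases eq_or_ne i e with rfl | h
  · simp
  · simp [Function.update_of_ne h]

/-- affineness in one coordinate -/
lemma multilinear_affine (f : Finset E → ℝ) (x : E → ℝ) (e : E) (a : ℝ) :
    multilinear f (Function.update x e a) =
      (1 - a) * multilinear f (Function.update x e 0) +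
      a * multilinear f (Function.update x e 1) := by
  unfold multilinear
  rw [Finset.mul_sum, Finset.mul_sum, ← Finset.sum_add_distrib]
  refine Finset.sum_congr rfl fun S _ => ?_
  have hc : ∀ c : ℝ, (fun i => 1 - Function.update x e c i) = Function.update (fun i => 1 - x i) e (1 - c) :=
    fun c => one_sub_upd x e c
  by_cases hS : e ∈ S
  · have hS' : e ∉ Sᶜ := by simp [hS]
    rw [prod_upd_mem S _ e a hS, prod_upd_mem S _ e 0 hS, prod_upd_mem S _ e 1 hS]
    have h2 : ∀ c : ℝ, ∏ i ∈ Sᶜ, (1 - Function.update x e c i) = ∏ i ∈ Sᶜ, (1 - x i) := by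
      intro c; rw [hc c, Finset.prod_update_of_notMem hS']
    rw [h2, h2, h2]; ring
  · have hS' : e ∈ Sᶜ := by simp [hS]
    rw [Finset.prod_update_of_notMem hS, Finset.prod_update_of_notMem hS,
      Finset.prod_update_of_notMem hS]
    have h2 : ∀ c : ℝ, ∏ i ∈ Sᶜ, (1 - Function.update x e c i)
        = (1 - c) * ∏ i ∈ Sᶜ.erase e, (1 - x i) := by
      intro c; rw [hc c, prod_upd_mem _ _ e _ hS']
    rw [h2, h2, h2]; ring

lemma deriv_affine (c d s : ℝ) : deriv (fun t : ℝ => (1 - t) * c + t * d) s = d - c := by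
  have h : (fun t : ℝ => (1 - t) * c + t * d) = fun t : ℝ => c + t * (d - c) := by
    funext t; ring
  rw [h]
  simpa using (((hasDerivAt_id s).mul_const (d - c)).const_add c).deriv

/-- the mixed partial equals the 2nd difference of 0/1 substitutions -/
lemma mixed_eq (f : Finset E → ℝ) (x : E → ℝ) (e e' : E) (he : e ≠ e') :
    deriv (fun a : ℝ =>
        deriv (fun b : ℝ =>
            multilinear f (Function.update (Function.update x e a) e' b)) (x e'))
      (x e)
    = (multilinear f (Function.update (Function.update x e 1) e' 1)
        - multilinear f (Function.update (Function.update x e 1) e' 0))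
      - (multilinear f (Function.update (Function.update x e 0) e' 1)
        - multilinear f (Function.update (Function.update x e 0) e' 0)) := by
  have hinner : ∀ a : ℝ,
      deriv (fun b : ℝ => multilinear f (Function.update (Function.update x e a) e' b)) (x e')
      = multilinear f (Function.update (Function.update x e a) e' 1)
        - multilinear f (Function.update (Function.update x e a) e' 0) := by
    intro a
    have h1 : (fun b : ℝ => multilinear f (Function.update (Function.update x e a) e' b))
        = fun b : ℝ => (1 - b) * multilinear f (Function.update (Function.update x e a) e' 0)
            + b * multilinear f (Function.update (Function.update x e a) e' 1) := by
      funext b; exact multilinear_affine f _ e' b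
    rw [h1, deriv_affine]
  have houter : (fun a : ℝ =>
      deriv (fun b : ℝ => multilinear f (Function.update (Function.update x e a) e' b)) (x e'))
      = fun a : ℝ =>
        (1 - a) * (multilinear f (Function.update (Function.update x e 0) e' 1)
          - multilinear f (Function.update (Function.update x e 0) e' 0))
        + a * (multilinear f (Function.update (Function.update x e 1) e' 1)
          - multilinear f (Function.update (Function.update x e 1) e' 0)) := by
    funext a
    rw [hinner a]
    have comm : ∀ b : ℝ, ∀ c : ℝ, Function.update (Function.update x e c) e' b
        = Function.update (Function.update x e' b) e c := fun b c => Function.update_comm he c b x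
    rw [comm 1 a, comm 0 a, multilinear_affine f _ e a, multilinear_affine f _ e a,
      ← comm 1 0, ← comm 0 0, ← comm 1 1, ← comm 0 1]
    ring
  rw [houter, deriv_affine]

/-- expansion of the multilinear extension isolating coordinates e, e' -/
lemma multilinear_expand (f : Finset E → ℝ) (x : E → ℝ) (e e' : E) (he : e ≠ e') (a b : ℝ) :
    multilinear f (Function.update (Function.update x e a) e' b)
    = ∑ T ∈ ((univ.erase e').erase e).powerset,
        ((1-a)*(1-b)*f T + a*(1-b)*f (insert e T) + (1-a)*b*f (insert e' T)
          + a*b*f (insert e (insert e' T)))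
        * ((∏ i ∈ T, x i) * ∏ i ∈ (insert e (insert e' T))ᶜ, (1 - x i)) := by
  classical
  set u : Finset E := (univ.erase e').erase e with hu
  have heu : e ∉ u := Finset.notMem_erase e _
  have he'u : e' ∉ insert e u := by
    simp [hu, he.symm, Finset.mem_erase]
  have huniv : insert e' (insert e u) = (univ : Finset E) := by
    ext i
    simp only [Finset.mem_insert, hu, Finset.mem_erase, Finset.mem_univ, iff_true, and_true]
    tauto
  set y : E → ℝ := Function.update (Function.update x e a) e' b with hy
  have hye : y e = a := by
    rw [hy, Function.update_of_ne he, Function.update_self]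
  have hye' : y e' = b := by rw [hy, Function.update_self]
  have hyi : ∀ i, i ≠ e → i ≠ e' → y i = x i := by
    intro i h1 h2; rw [hy, Function.update_of_ne h2, Function.update_of_ne h1]
  unfold multilinear
  have hpu : (Finset.univ : Finset (Finset E)) = (Finset.univ : Finset E).powerset :=
    Finset.powerset_univ.symm
  rw [hpu, ← huniv,
    Finset.sum_powerset_insert he'u, Finset.sum_powerset_insert heu,
    Finset.sum_powerset_insert heu, ← Finset.sum_add_distrib, ← Finset.sum_add_distrib, ← Finset.sum_add_distrib]
  refine Finset.sum_congr rfl fun T hT => ?_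
  rw [Finset.mem_powerset] at hT
  have heT : e ∉ T := fun h => heu (hT h)
  have he'T : e' ∉ T := fun h => by
    have := hT h; rw [hu] at this; exact (Finset.mem_erase.mp (Finset.mem_of_mem_erase this)).1 rfl
  have he'eT : e' ∉ insert e T := by simp [he.symm, he'T]
  have heeT' : e ∉ insert e' T := by simp [he, heT]
  -- products over the base sets
  have hPT : ∏ i ∈ T, y i = ∏ i ∈ T, x i :=
    Finset.prod_congr rfl fun i hi => hyi i (fun h => heT (h ▸ hi)) (fun h => he'T (h ▸ hi))
  have hQset : ∀ s : Finset E, e ∉ s → e' ∉ s → ∏ i ∈ s, (1 - y i) = ∏ i ∈ s, (1 - x i) := by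
    intro s h1 h2
    exact Finset.prod_congr rfl fun i hi => by
      rw [hyi i (fun h => h1 (h ▸ hi)) (fun h => h2 (h ▸ hi))]
  -- the complement sets
  have hcomp : (insert e (insert e' T))ᶜ = (Tᶜ.erase e').erase e := by
    rw [Finset.compl_insert, Finset.compl_insert, Finset.erase_right_comm]
  have hQ : ∏ i ∈ (insert e (insert e' T))ᶜ, (1 - x i)
      = ∏ i ∈ (Tᶜ.erase e').erase e, (1 - x i) := by rw [hcomp]
  set Q : ℝ := ∏ i ∈ (Tᶜ.erase e').erase e, (1 - x i) with hQdef
  have hQne : e ∉ (Tᶜ.erase e').erase e := Finset.notMem_erase _ _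
  have hQne' : e' ∉ (Tᶜ.erase e').erase e := fun h =>
    Finset.notMem_erase e' Tᶜ (Finset.mem_of_mem_erase h)
  -- g T
  have gQ : ∀ s : Finset E, e ∈ s → e' ∉ s →
      ∏ i ∈ s, (1 - y i) = (1 - a) * ∏ i ∈ s.erase e, (1 - y i) := by
    intro s h1 _
    rw [← hye]
    exact (Finset.mul_prod_erase _ (fun i => 1 - y i) h1).symm
  have gQ' : ∀ s : Finset E, e' ∈ s →
      ∏ i ∈ s, (1 - y i) = (1 - b) * ∏ i ∈ s.erase e', (1 - y i) := by
    intro s h1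
    rw [← hye']
    exact (Finset.mul_prod_erase _ (fun i => 1 - y i) h1).symm
  have g00 : f T * (∏ i ∈ T, y i) * ∏ i ∈ Tᶜ, (1 - y i)
      = f T * (∏ i ∈ T, x i) * ((1-b) * ((1-a) * Q)) := by
    have he'c : e' ∈ Tᶜ := by simp [he'T]
    have hec : e ∈ Tᶜ.erase e' := by simp [Finset.mem_erase, he, heT]
    rw [hPT, gQ' _ he'c, gQ _ hec (Finset.notMem_erase _ _), hQset _ hQne hQne']
  have g01 : f (insert e' T) * (∏ i ∈ insert e' T, y i) * ∏ i ∈ (insert e' T)ᶜ, (1 - y i)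
      = f (insert e' T) * (b * ∏ i ∈ T, x i) * ((1-a) * Q) := by
    have hec : e ∈ Tᶜ.erase e' := by simp [Finset.mem_erase, he, heT]
    rw [Finset.prod_insert he'T, hye', hPT, Finset.compl_insert,
      gQ _ hec (Finset.notMem_erase _ _), hQset _ hQne hQne']
  have g10 : f (insert e T) * (∏ i ∈ insert e T, y i) * ∏ i ∈ (insert e T)ᶜ, (1 - y i)
      = f (insert e T) * (a * ∏ i ∈ T, x i) * ((1-b) * Q) := by
    have he'c : e' ∈ Tᶜ.erase e := by simp [Finset.mem_erase, he.symm, he'T]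
    rw [Finset.prod_insert heT, hye, hPT, Finset.compl_insert, gQ' _ he'c,
      Finset.erase_right_comm, hQset _ hQne hQne']
  have g11 : f (insert e' (insert e T)) * (∏ i ∈ insert e' (insert e T), y i)
        * ∏ i ∈ (insert e' (insert e T))ᶜ, (1 - y i)
      = f (insert e' (insert e T)) * (b * (a * ∏ i ∈ T, x i)) * Q := by
    have hcomp2 : (insert e' (insert e T))ᶜ = (Tᶜ.erase e').erase e := by
      rw [Finset.compl_insert, Finset.compl_insert, Finset.erase_right_comm]
    rw [Finset.prod_insert he'eT, hye', Finset.prod_insert heT, hye, hPT, hcomp2,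
      hQset _ hQne hQne']
  have hic : insert e' (insert e T) = insert e (insert e' T) := by
    ext i; simp only [Finset.mem_insert]; tauto
  rw [g00, g01, g10, g11, hQ, hic]
  ring

lemma mixed_sum (f : Finset E → ℝ) (x : E → ℝ) (e e' : E) (he : e ≠ e') :
    deriv (fun a : ℝ =>
        deriv (fun b : ℝ =>
            multilinear f (Function.update (Function.update x e a) e' b)) (x e'))
      (x e)
    = ∑ T ∈ ((univ.erase e').erase e).powerset,
        (f (insert e (insert e' T)) - f (insert e T) - f (insert e' T) + f T)
        * ((∏ i ∈ T, x i) * ∏ i ∈ (insert e (insert e' T))ᶜ, (1 - x i)) := by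
  rw [mixed_eq f x e e' he, multilinear_expand f x e e' he 1 1,
    multilinear_expand f x e e' he 1 0, multilinear_expand f x e e' he 0 1,
    multilinear_expand f x e e' he 0 0, ← Finset.sum_sub_distrib, ← Finset.sum_sub_distrib,
    ← Finset.sum_sub_distrib]
  refine Finset.sum_congr rfl fun T _ => ?_
  ring

lemma pairwise_of_mixed (f : Finset E → ℝ)
    (h : ∀ x : E → ℝ, (∀ e, x e ∈ Set.Icc (0 : ℝ) 1) → ∀ e e' : E, e ≠ e' →
      deriv (fun a : ℝ =>
          deriv (fun b : ℝ =>
              multilinear f (Function.update (Function.update x e a) e' b)) (x e'))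
        (x e) ≤ 0)
    (e e' : E) (he : e ≠ e') (S : Finset E) (heS : e ∉ S) (he'S : e' ∉ S) :
    f (insert e (insert e' S)) + f S ≤ f (insert e S) + f (insert e' S) := by
  classical
  set x : E → ℝ := fun i => if i ∈ S then 1 else 0 with hx
  have hbox : ∀ i, x i ∈ Set.Icc (0 : ℝ) 1 := by
    intro i; by_cases hi : i ∈ S <;> simp [hx, hi]
  have key := h x hbox e e' he
  rw [mixed_sum f x e e' he] at key
  have hSmem : S ∈ ((univ.erase e').erase e).powerset := by
    rw [Finset.mem_powerset]
    intro i hi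
    exact Finset.mem_erase.mpr ⟨fun hh => heS (hh ▸ hi),
      Finset.mem_erase.mpr ⟨fun hh => he'S (hh ▸ hi), Finset.mem_univ i⟩⟩
  have hsum : ∑ T ∈ ((univ.erase e').erase e).powerset,
        (f (insert e (insert e' T)) - f (insert e T) - f (insert e' T) + f T)
        * ((∏ i ∈ T, x i) * ∏ i ∈ (insert e (insert e' T))ᶜ, (1 - x i))
      = f (insert e (insert e' S)) - f (insert e S) - f (insert e' S) + f S := by
    rw [Finset.sum_eq_single S]
    · have h1 : ∏ i ∈ S, x i = 1 := Finset.prod_eq_one fun i hi => by simp [hx, hi]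
      have h2 : ∏ i ∈ (insert e (insert e' S))ᶜ, (1 - x i) = 1 := by
        refine Finset.prod_eq_one fun i hi => ?_
        rw [Finset.mem_compl, Finset.mem_insert, Finset.mem_insert] at hi
        push_neg at hi
        simp [hx, hi.2.2]
      rw [h1, h2]; ring
    · intro T hT hTS
      rw [Finset.mem_powerset] at hT
      by_cases hsub : T ⊆ S
      · obtain ⟨i, hiS, hiT⟩ : ∃ i ∈ S, i ∉ T := by
          by_contra hc; push_neg at hc
          exact hTS (Finset.Subset.antisymm hsub hc)
        have hie : i ≠ e := fun hh => heS (hh ▸ hiS)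
        have hie' : i ≠ e' := fun hh => he'S (hh ▸ hiS)
        have hi : i ∈ (insert e (insert e' T))ᶜ := by
          simp [Finset.mem_insert, hie, hie', hiT]
        have : (1 : ℝ) - x i = 0 := by simp [hx, hiS]
        rw [Finset.prod_eq_zero hi this]
        ring
      · obtain ⟨i, hiT, hiS⟩ : ∃ i ∈ T, i ∉ S := by
          by_contra hc; push_neg at hc; exact hsub hc
        have : x i = 0 := by simp [hx, hiS]
        rw [Finset.prod_eq_zero hiT this]
        ring
    · intro hc; exact absurd hSmem hc
  rw [hsum] at key
  linarith

lemma marg_of_pairwise (f : Finset E → ℝ)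
    (hp : ∀ e e' : E, e ≠ e' → ∀ S : Finset E, e ∉ S → e' ∉ S →
      f (insert e (insert e' S)) + f S ≤ f (insert e S) + f (insert e' S)) :
    ∀ n (S T : Finset E), S ⊆ T → (T \ S).card = n → ∀ e, e ∉ T →
      f (insert e T) + f S ≤ f (insert e S) + f T := by
  intro n
  induction n with
  | zero =>
    intro S T hST hc e _
    have : T = S := Finset.Subset.antisymm
      (fun i hi => by
        by_contra hiS
        have : i ∈ T \ S := Finset.mem_sdiff.mpr ⟨hi, hiS⟩
        simp [Finset.card_eq_zero.mp hc] at this) hST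
    rw [this]
  | succ n ih =>
    intro S T hST hc e heT
    obtain ⟨p, hp'⟩ := Finset.card_pos.mp (by rw [hc]; exact Nat.succ_pos n)
    rw [Finset.mem_sdiff] at hp'
    obtain ⟨hpT, hpS⟩ := hp'
    have hep : e ≠ p := fun hh => heT (hh ▸ hpT)
    set T' := T.erase p with hT'
    have hST' : S ⊆ T' := fun i hi =>
      Finset.mem_erase.mpr ⟨fun hh => hpS (hh ▸ hi), hST hi⟩
    have heT' : e ∉ T' := fun hh => heT (Finset.mem_of_mem_erase hh)
    have hpT' : p ∉ T' := Finset.notMem_erase _ _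
    have hcT' : (T' \ S).card = n := by
      have h1 : T' \ S = (T \ S).erase p := by
        rw [hT', Finset.erase_sdiff_comm]
      rw [h1, Finset.card_erase_of_mem (Finset.mem_sdiff.mpr ⟨hpT, hpS⟩), hc]
      rfl
    have hpair := hp e p hep T' heT' hpT'
    rw [hT', Finset.insert_erase hpT] at hpair
    have hih := ih S T' hST' hcT' e heT'
    rw [hT'] at hih
    linarith

lemma submodular_of_pairwise (f : Finset E → ℝ)
    (hp : ∀ e e' : E, e ≠ e' → ∀ S : Finset E, e ∉ S → e' ∉ S →
      f (insert e (insert e' S)) + f S ≤ f (insert e S) + f (insert e' S)) :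
    ∀ A B : Finset E, f (A ∪ B) + f (A ∩ B) ≤ f A + f B := by
  classical
  have marg := marg_of_pairwise f hp
  have key : ∀ n (A B : Finset E), (B \ A).card = n →
      f (A ∪ B) + f (A ∩ B) ≤ f A + f B := by
    intro n
    induction n with
    | zero =>
      intro A B hc
      have hBA : B ⊆ A := by
        intro i hi
        by_contra hiA
        have : i ∈ B \ A := Finset.mem_sdiff.mpr ⟨hi, hiA⟩
        simp [Finset.card_eq_zero.mp hc] at this
      rw [Finset.union_eq_left.mpr hBA, Finset.inter_eq_right.mpr hBA]
    | succ n ih =>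
      intro A B hc
      obtain ⟨e, he'⟩ := Finset.card_pos.mp (by rw [hc]; exact Nat.succ_pos n)
      rw [Finset.mem_sdiff] at he'
      obtain ⟨heB, heA⟩ := he'
      set B' := B.erase e with hB'
      have heB' : e ∉ B' := Finset.notMem_erase _ _
      have hinsB : insert e B' = B := by rw [hB', Finset.insert_erase heB]
      have hcB' : (B' \ A).card = n := by
        have h1 : B' \ A = (B \ A).erase e := by rw [hB', Finset.erase_sdiff_comm]
        rw [h1, Finset.card_erase_of_mem (Finset.mem_sdiff.mpr ⟨heB, heA⟩), hc]
        rfl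
      have hU : A ∪ B = insert e (A ∪ B') := by
        rw [← hinsB, Finset.union_insert]
      have hI : A ∩ B = A ∩ B' := by
        ext i
        simp only [Finset.mem_inter, hB', Finset.mem_erase]
        exact ⟨fun ⟨h1, h2⟩ => ⟨h1, fun hh => heA (hh ▸ h1), h2⟩, fun ⟨h1, _, h3⟩ => ⟨h1, h3⟩⟩
      have heAB' : e ∉ A ∪ B' := by
        rw [Finset.mem_union]; push_neg; exact ⟨heA, heB'⟩
      have hBsub : B' ⊆ A ∪ B' := Finset.subset_union_right
      have hm := marg ((A ∪ B') \ B').card B' (A ∪ B') hBsub rfl e heAB'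
      have hih := ih A B' hcB'
      rw [hinsB] at hm
      rw [hU, hI]
      linarith
  intro A B
  exact key (B \ A).card A B rfl


end Helpers

/-- `f` is submodular iff all mixed second partial derivatives
`∂²F/∂x_e∂x_{e'}` (for `e ≠ e'`) of its multilinear extension `F` are
nonpositive on `[0,1]^E`. -/
theorem submodular_iff_mixed_partials_nonpos {E : Type*} [DecidableEq E] [Fintype E]
    (f : Finset E → ℝ) :
    (∀ A B : Finset E, f (A ∪ B) + f (A ∩ B) ≤ f A + f B) ↔
    (∀ x : E → ℝ, (∀ e, x e ∈ Set.Icc (0 : ℝ) 1) → ∀ e e' : E, e ≠ e' →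
      deriv (fun a : ℝ =>
          deriv (fun b : ℝ =>
              multilinear f (Function.update (Function.update x e a) e' b))
            (x e'))
        (x e) ≤ 0) := by
  constructor
  · intro hsub x hbox e e' he
    rw [mixed_sum f x e e' he]
    refine Finset.sum_nonpos fun T hT => ?_
    rw [Finset.mem_powerset] at hT
    have heT : e ∉ T := fun h => (Finset.mem_erase.mp (hT h)).1 rfl
    have he'T : e' ∉ T := fun h =>
      (Finset.mem_erase.mp (Finset.mem_of_mem_erase (hT h))).1 rfl
    have hc : f (insert e (insert e' T)) - f (insert e T) - f (insert e' T) + f T ≤ 0 := by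
      have hU : insert e T ∪ insert e' T = insert e (insert e' T) := by
        ext i; simp only [Finset.mem_union, Finset.mem_insert]; tauto
      have hI : insert e T ∩ insert e' T = T := by
        ext i
        simp only [Finset.mem_inter, Finset.mem_insert]
        constructor
        · rintro ⟨h1 | h1, h2 | h2⟩
          · exact absurd (h1.symm.trans h2) he
          · exact absurd (h1 ▸ h2) heT
          · exact absurd (h2 ▸ h1) he'T
          · exact h1
        · intro h1; exact ⟨Or.inr h1, Or.inr h1⟩
      have := hsub (insert e T) (insert e' T)
      rw [hU, hI] at this
      linarith
    have hP : (0:ℝ) ≤ (∏ i ∈ T, x i) * ∏ i ∈ (insert e (insert e' T))ᶜ, (1 - x i) := by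
      refine mul_nonneg (Finset.prod_nonneg fun i _ => (hbox i).1)
        (Finset.prod_nonneg fun i _ => ?_)
      linarith [(hbox i).2]
    exact mul_nonpos_of_nonpos_of_nonneg hc hP
  · intro h
    exact submodular_of_pairwise f fun e e' he S heS he'S =>
      pairwise_of_mixed f h e e' he S heS he'S
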